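/- Let d ≥ 2, M > 0, ε > 0 and n ≥ 1. Let (f_in(y))_{y∈{1,…,n}^{d−1}} be real numbers with −M ≤ f_in(y) ≤ ε for every y, and such that for every i ∈ {0,…,d−2} and every y ∈ {1,…,n}^i, either Σ_{x∈{1,…,n}^{d−1−i}} f_in(y,x) ≥ 0, or |f_in(y,x) − f_in(y,z)| ≤ ε for all x, z ∈ {1,…,n}^{d−1−i}. Then there exists a stream f : 𝔼^d → ℝ^d such that: (i) f(e) = 0 for every edge e not belonging to [0,(d−1)n)×[1,n]^{d−1}; (ii) for every edge e parallel to e₁, −M ≤ f(e)·e₁ ≤ ε, and ‖f(e)‖₂ ≤ ε for every other edge; (iii) f(⟨(0,y),(1,y)⟩) = f_in(y)·e₁ and f(⟨((d−1)n−1,y),((d−1)n,y)⟩) = (n^{−(d−1)} Σ_{z∈{1,…,n}^{d−1}} f_in(z))·e₁ for every y ∈ {1,…,n}^{d−1}; (iv) the node law holds at every vertex of ℤ^d ∖ (({0}×{1,…,n}^{d−1}) ∪ ({(d−1)n}×{1,…,n}^{d−1})). -/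

import Mathlib

open scoped ENNReal

namespace FPP

/-- An edge of the lattice `(ℤ^d, 𝔼^d)`, encoded by its left endpoint together with its
direction: the edge `(z, i)` joins `z` to `z + eᵢ`. -/
abbrev Edge (d : ℕ) := (Fin d → ℤ) × Fin d

/-- A stream `f : 𝔼^d → ℝ^d`, encoded by its signed intensity `F e` along each edge `e`:
the vector value of the stream on `e = (z,i)` is `(F e) • eᵢ`, automatically collinear
with `e`. -/
abbrev Streamm (d : ℕ) := Edge d → ℝ

/-- `z + eᵢ` -/
def shift {d : ℕ} (z : Fin d → ℤ) (i : Fin d) : Fin d → ℤ := fun j => z j + if j = i then 1 else 0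

/-- `z - eᵢ` -/
def unshift {d : ℕ} (z : Fin d → ℤ) (i : Fin d) : Fin d → ℤ := fun j => z j - if j = i then 1 else 0

/-- The node law `∑_{y : ⟨v,y⟩ ∈ 𝔼^d} f(⟨v,y⟩)·(y - v) = 0` at the vertex `z`. -/
def nodeLaw {d : ℕ} (F : Streamm d) (z : Fin d → ℤ) : Prop :=
  ∑ i : Fin d, (F (z, i) - F (unshift z i, i)) = 0

/-- the index box `{1,…,n}^{d-1}` (here `d = d₀ + 1`) -/
noncomputable def boxIdx (d₀ n : ℕ) : Finset (Fin d₀ → ℤ) :=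
  Finset.Icc (fun _ => (1 : ℤ)) (fun _ => (n : ℤ))

/-- left endpoint of an edge in the box `[0,m) × [1,n]^{d-1}` -/
def inBoxEdge (d₀ : ℕ) (m n : ℕ) (e : Edge (d₀ + 1)) : Prop :=
  0 ≤ e.1 0 ∧ e.1 0 < (m : ℤ) ∧ ∀ k : Fin d₀, 1 ≤ e.1 k.succ ∧ e.1 k.succ ≤ (n : ℤ)

section Aux

variable (d₀ n : ℕ) (fin : (Fin d₀ → ℤ) → ℝ)

lemma mem_boxIdx {d₀ n : ℕ} {y : Fin d₀ → ℤ} :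
    y ∈ boxIdx d₀ n ↔ ∀ k, 1 ≤ y k ∧ y k ≤ (n : ℤ) := by
  simp [boxIdx, Finset.mem_Icc, Pi.le_def, forall_and]

variable (d₀ n : ℕ) (fin : (Fin d₀ → ℤ) → ℝ)

/-- indices in the box agreeing with `y` on the first `j` coordinates -/
noncomputable def idxSet (j : ℕ) (y : Fin d₀ → ℤ) : Finset (Fin d₀ → ℤ) :=
  (boxIdx d₀ n).filter (fun x => ∀ k : Fin d₀, (k : ℕ) < j → x k = y k)

noncomputable def pSum (j : ℕ) (y : Fin d₀ → ℤ) : ℝ := ∑ x ∈ idxSet d₀ n j y, fin x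

noncomputable def gAvg (j : ℕ) (y : Fin d₀ → ℤ) : ℝ := pSum d₀ n fin j y / (n : ℝ) ^ (d₀ - j)

lemma idxSet_zero (y : Fin d₀ → ℤ) : idxSet d₀ n 0 y = boxIdx d₀ n := by
  simp [idxSet]

lemma idxSet_top {y : Fin d₀ → ℤ} (hy : y ∈ boxIdx d₀ n) : idxSet d₀ n d₀ y = {y} := by
  ext x
  simp only [idxSet, Finset.mem_filter, Finset.mem_singleton]
  constructor
  · rintro ⟨-, h⟩
    exact funext fun k => h k k.isLt
  · rintro rfl
    exact ⟨hy, fun _ _ => rfl⟩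

lemma update_mem_boxIdx {y : Fin d₀ → ℤ} (hy : y ∈ boxIdx d₀ n) (j : Fin d₀)
    {u : ℤ} (hu : u ∈ Finset.Icc (1:ℤ) n) : Function.update y j u ∈ boxIdx d₀ n := by
  rw [mem_boxIdx] at hy ⊢
  rw [Finset.mem_Icc] at hu
  intro k
  rcases eq_or_ne k j with rfl | h
  · simpa using hu
  · simpa [Function.update_of_ne h] using hy k

lemma idxSet_fiber (j : Fin d₀) (y : Fin d₀ → ℤ) (u : ℤ) :
    (idxSet d₀ n (j : ℕ) y).filter (fun x => x j = u)
      = idxSet d₀ n ((j : ℕ) + 1) (Function.update y j u) := by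
  ext x
  simp only [idxSet, Finset.mem_filter, and_assoc]
  constructor
  · rintro ⟨hx, h1, h2⟩
    refine ⟨hx, fun k hk => ?_⟩
    rcases eq_or_ne k j with rfl | h
    · simpa [Function.update_self] using h2
    · have : (k : ℕ) < (j : ℕ) := by
        have := Fin.val_ne_of_ne h
        omega
      rw [Function.update_of_ne h]
      exact h1 k this
  · rintro ⟨hx, h⟩
    refine ⟨hx, fun k hk => ?_, ?_⟩
    · have hkj : k ≠ j := by
        intro e; subst e; omega
      have := h k (by omega)
      rwa [Function.update_of_ne hkj] at this
    · simpa using h j (by omega)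

lemma pSum_rec (j : Fin d₀) (y : Fin d₀ → ℤ) :
    pSum d₀ n fin (j : ℕ) y
      = ∑ u ∈ Finset.Icc (1:ℤ) n, pSum d₀ n fin ((j : ℕ) + 1) (Function.update y j u) := by
  unfold pSum
  rw [← Finset.sum_fiberwise_of_maps_to (g := fun x => x j) (t := Finset.Icc (1:ℤ) n)]
  · exact Finset.sum_congr rfl fun u _ => by rw [idxSet_fiber]
  · intro x hx
    have hx' : x ∈ boxIdx d₀ n := (Finset.mem_filter.1 hx).1
    rw [mem_boxIdx] at hx'
    exact Finset.mem_Icc.2 (hx' j)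

lemma pSum_one_eq : ∀ t j (y : Fin d₀ → ℤ), j + t = d₀ → y ∈ boxIdx d₀ n →
    pSum d₀ n (fun _ => (1:ℝ)) j y = (n : ℝ) ^ t := by
  intro t
  induction t with
  | zero =>
    intro j y hj hy
    have : j = d₀ := by omega
    subst this
    rw [pSum, idxSet_top _ n hy]
    simp
  | succ t ih =>
    intro j y hj hy
    have hjd : j < d₀ := by omega
    have := pSum_rec d₀ n (fun _ => (1:ℝ)) ⟨j, hjd⟩ y
    simp only [Fin.val_mk] at this
    rw [this]
    rw [Finset.sum_congr rfl (fun u hu => ih (j+1) _ (by omega)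
      (update_mem_boxIdx d₀ n hy ⟨j, hjd⟩ hu))]
    rw [Finset.sum_const]
    have : (Finset.Icc (1:ℤ) (n:ℤ)).card = n := by
      rw [Int.card_Icc]; simp
    rw [this]
    push_cast
    ring

lemma pSum_card {j : ℕ} (hj : j ≤ d₀) {y : Fin d₀ → ℤ} (hy : y ∈ boxIdx d₀ n) :
    pSum d₀ n (fun _ => (1:ℝ)) j y = (n : ℝ) ^ (d₀ - j) :=
  pSum_one_eq d₀ n (d₀ - j) j y (by omega) hy

lemma gAvg_rec {j : ℕ} (hj : j < d₀) (hn : 1 ≤ n) (y : Fin d₀ → ℤ) :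
    gAvg d₀ n fin j y
      = (∑ u ∈ Finset.Icc (1:ℤ) n, gAvg d₀ n fin (j + 1) (Function.update y ⟨j, hj⟩ u)) / n := by
  unfold gAvg
  have := pSum_rec d₀ n fin ⟨j, hj⟩ y
  simp only [Fin.val_mk] at this
  rw [this, Finset.sum_div, Finset.sum_div]
  refine Finset.sum_congr rfl fun u _ => ?_
  have hpow : (n:ℝ) ^ (d₀ - j) = (n:ℝ) ^ (d₀ - (j+1)) * n := by
    rw [← pow_succ]
    congr 1
    omega
  rw [hpow]
  field_simp

lemma gAvg_bounds {M ε : ℝ} (hM : 0 < M) (hε : 0 < ε) (hn : 1 ≤ n)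
    (hrange : ∀ y ∈ boxIdx d₀ n, -M ≤ fin y ∧ fin y ≤ ε)
    {j : ℕ} (hj : j ≤ d₀) {y : Fin d₀ → ℤ} (hy : y ∈ boxIdx d₀ n) :
    -M ≤ gAvg d₀ n fin j y ∧ gAvg d₀ n fin j y ≤ ε := by
  have hpow : (0:ℝ) < (n:ℝ) ^ (d₀ - j) := by positivity
  have hsub : ∀ x ∈ idxSet d₀ n j y, x ∈ boxIdx d₀ n := fun x hx => (Finset.mem_filter.1 hx).1
  have hup : pSum d₀ n fin j y ≤ ε * (n:ℝ) ^ (d₀ - j) := by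
    calc pSum d₀ n fin j y ≤ ∑ x ∈ idxSet d₀ n j y, ε :=
          Finset.sum_le_sum fun x hx => (hrange x (hsub x hx)).2
      _ = ε * (n:ℝ) ^ (d₀ - j) := by
          rw [Finset.sum_const, ← pSum_card d₀ n hj hy]
          simp [pSum, mul_comm]
  have hlo : -M * (n:ℝ) ^ (d₀ - j) ≤ pSum d₀ n fin j y := by
    calc -M * (n:ℝ) ^ (d₀ - j) = ∑ x ∈ idxSet d₀ n j y, -M := by
          rw [Finset.sum_const, ← pSum_card d₀ n hj hy]
          simp [pSum, mul_comm]
      _ ≤ pSum d₀ n fin j y := Finset.sum_le_sum fun x hx => (hrange x (hsub x hx)).1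
  constructor
  · unfold gAvg
    rw [le_div_iff₀ hpow]
    linarith
  · unfold gAvg
    rw [div_le_iff₀ hpow]
    linarith


lemma pSum_top {y : Fin d₀ → ℤ} (hy : y ∈ boxIdx d₀ n) : pSum d₀ n fin d₀ y = fin y := by
  simp [pSum, idxSet_top d₀ n hy]

lemma idxSet_succ_subset (j : Fin d₀) (y : Fin d₀ → ℤ) (u : ℤ) :
    idxSet d₀ n ((j:ℕ)+1) (Function.update y j u) ⊆ idxSet d₀ n (j:ℕ) y := by
  intro x hx
  rw [idxSet, Finset.mem_filter] at hx ⊢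
  refine ⟨hx.1, fun k hk => ?_⟩
  have hkj : k ≠ j := fun e => by subst e; omega
  have := hx.2 k (by omega)
  rwa [Function.update_of_ne hkj] at this

lemma mem_idxSet_succ {j : Fin d₀} {y : Fin d₀ → ℤ} {u : ℤ} {x : Fin d₀ → ℤ}
    (hx : x ∈ idxSet d₀ n ((j:ℕ)+1) (Function.update y j u)) :
    x ∈ boxIdx d₀ n ∧ x j = u ∧ ∀ k : Fin d₀, (k:ℕ) < (j:ℕ) → x k = y k := by
  rw [idxSet, Finset.mem_filter] at hx
  refine ⟨hx.1, ?_, fun k hk => ?_⟩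
  · have := hx.2 j (by omega)
    simpa using this
  · have hkj : k ≠ j := fun e => by subst e; omega
    have := hx.2 k (by omega)
    rwa [Function.update_of_ne hkj] at this

lemma mem_idxSet_succ' {j : Fin d₀} {y : Fin d₀ → ℤ} {u : ℤ} {x : Fin d₀ → ℤ}
    (hb : x ∈ boxIdx d₀ n) (hju : x j = u) (hk : ∀ k : Fin d₀, (k:ℕ) < (j:ℕ) → x k = y k) :
    x ∈ idxSet d₀ n ((j:ℕ)+1) (Function.update y j u) := by
  rw [idxSet, Finset.mem_filter]
  refine ⟨hb, fun k hk' => ?_⟩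
  rcases eq_or_ne k j with rfl | h
  · simpa using hju
  · rw [Function.update_of_ne h]
    exact hk k (by have := Fin.val_ne_of_ne h; omega)

lemma gAvg_close {ε : ℝ} (hn : 1 ≤ n) {j : Fin d₀} {y : Fin d₀ → ℤ} (hy : y ∈ boxIdx d₀ n)
    (hclose : ∀ x ∈ idxSet d₀ n (j:ℕ) y, ∀ z ∈ idxSet d₀ n (j:ℕ) y, |fin x - fin z| ≤ ε)
    {u u' : ℤ} (hu : u ∈ Finset.Icc (1:ℤ) n) (hu' : u' ∈ Finset.Icc (1:ℤ) n) :
    |gAvg d₀ n fin ((j:ℕ)+1) (Function.update y j u)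
      - gAvg d₀ n fin ((j:ℕ)+1) (Function.update y j u')| ≤ ε := by
  have hε0 : 0 ≤ ε := le_trans (abs_nonneg _) (hclose y ?hy0 y ?hy0)
  case hy0 =>
    rw [idxSet, Finset.mem_filter]
    exact ⟨hy, fun _ _ => rfl⟩
  set S := idxSet d₀ n ((j:ℕ)+1) (Function.update y j u) with hS
  have hrw : pSum d₀ n fin ((j:ℕ)+1) (Function.update y j u')
      = ∑ x ∈ S, fin (Function.update x j u') := by
    rw [pSum]
    refine Finset.sum_nbij' (fun x => Function.update x j u) (fun x => Function.update x j u')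
      ?_ ?_ ?_ ?_ ?_
    · intro x hx
      obtain ⟨hb, hju, hk⟩ := mem_idxSet_succ d₀ n hx
      refine mem_idxSet_succ' d₀ n (update_mem_boxIdx d₀ n hb j hu) (by simp) ?_
      intro k hk'
      have hkj : k ≠ j := fun e => by subst e; omega
      simpa [Function.update_of_ne hkj] using hk k hk'
    · intro x hx
      obtain ⟨hb, hju, hk⟩ := mem_idxSet_succ d₀ n hx
      refine mem_idxSet_succ' d₀ n (update_mem_boxIdx d₀ n hb j hu') (by simp) ?_
      intro k hk'
      have hkj : k ≠ j := fun e => by subst e; omega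
      simpa [Function.update_of_ne hkj] using hk k hk'
    · intro x hx
      obtain ⟨hb, hju, hk⟩ := mem_idxSet_succ d₀ n hx
      simp only [Function.update_idem, ← hju, Function.update_eq_self]
    · intro x hx
      obtain ⟨hb, hju, hk⟩ := mem_idxSet_succ d₀ n hx
      simp only [Function.update_idem, ← hju, Function.update_eq_self]
    · intro x hx
      obtain ⟨hb, hju, hk⟩ := mem_idxSet_succ d₀ n hx
      simp only [Function.update_idem, ← hju, Function.update_eq_self]
  have hpow : (0:ℝ) < (n : ℝ) ^ (d₀ - ((j:ℕ)+1)) := by positivity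
  have hcard : ((S.card : ℝ)) = (n : ℝ) ^ (d₀ - ((j:ℕ)+1)) := by
    have hmem : Function.update y j u ∈ boxIdx d₀ n := update_mem_boxIdx d₀ n hy j hu
    have := pSum_card d₀ n (j := (j:ℕ)+1) (by omega) hmem
    simpa [pSum, Finset.sum_const] using this
  have hdiff : |pSum d₀ n fin ((j:ℕ)+1) (Function.update y j u)
      - pSum d₀ n fin ((j:ℕ)+1) (Function.update y j u')| ≤ (S.card : ℝ) * ε := by
    rw [hrw, pSum, ← hS, ← Finset.sum_sub_distrib]
    calc |∑ x ∈ S, (fin x - fin (Function.update x j u'))|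
        ≤ ∑ x ∈ S, |fin x - fin (Function.update x j u')| := Finset.abs_sum_le_sum_abs _ _
      _ ≤ ∑ x ∈ S, ε := by
          refine Finset.sum_le_sum fun x hx => ?_
          obtain ⟨hb, hju, hk⟩ := mem_idxSet_succ d₀ n hx
          refine hclose x (idxSet_succ_subset d₀ n j y u hx) _ ?_
          have : Function.update x j u' ∈ idxSet d₀ n ((j:ℕ)+1) (Function.update y j u') := by
            refine mem_idxSet_succ' d₀ n (update_mem_boxIdx d₀ n hb j hu') (by simp) ?_
            intro k hk'
            have hkj : k ≠ j := fun e => by subst e; omega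
            rw [Function.update_of_ne hkj]; exact hk k hk'
          exact idxSet_succ_subset d₀ n j y u' this
      _ = (S.card : ℝ) * ε := by rw [Finset.sum_const]; simp [mul_comm]
  rw [gAvg, gAvg, div_sub_div_same, abs_div, abs_of_pos hpow, div_le_iff₀ hpow]
  rw [hcard] at hdiff
  linarith


lemma card_Icc_real {a b : ℤ} (h : a ≤ b + 1) :
    ((Finset.Icc a b).card : ℝ) = (b:ℝ) + 1 - a := by
  have : ((Finset.Icc a b).card : ℤ) = b + 1 - a := by
    rw [Int.card_Icc, Int.toNat_of_nonneg (by omega)]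
  exact_mod_cast this

lemma Icc_one_eq_Ioc (b : ℤ) : Finset.Icc (1:ℤ) b = Finset.Ioc 0 b := by
  ext x; simp only [Finset.mem_Icc, Finset.mem_Ioc]; omega

lemma Icc_succ_eq_Ioc (a b : ℤ) : Finset.Icc (a+1) b = Finset.Ioc a b := by
  ext x; simp only [Finset.mem_Icc, Finset.mem_Ioc]; omega

lemma trans_bound {M ε : ℝ} (hM : 0 < M) (hε : 0 < ε) (hn : 1 ≤ n)
    (hrange : ∀ y ∈ boxIdx d₀ n, -M ≤ fin y ∧ fin y ≤ ε)
    {j : Fin d₀} {y : Fin d₀ → ℤ} (hy : y ∈ boxIdx d₀ n)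
    (hcase : 0 ≤ pSum d₀ n fin (j:ℕ) y ∨
      ∀ x ∈ idxSet d₀ n (j:ℕ) y, ∀ z ∈ idxSet d₀ n (j:ℕ) y, |fin x - fin z| ≤ ε)
    {t : ℤ} (h1 : 1 ≤ t) (h2 : t ≤ (n:ℤ) - 1) :
    |(∑ u ∈ Finset.Icc (1:ℤ) t, gAvg d₀ n fin ((j:ℕ)+1) (Function.update y j u))
      - t * gAvg d₀ n fin (j:ℕ) y| ≤ ((n:ℝ) - 1) * ε := by
  have hn0 : (0:ℝ) < n := by exact_mod_cast hn
  have htn : (t:ℝ) ≤ (n:ℝ) - 1 := by exact_mod_cast h2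
  have ht1 : (1:ℝ) ≤ (t:ℝ) := by exact_mod_cast h1
  set a : ℤ → ℝ := fun u => gAvg d₀ n fin ((j:ℕ)+1) (Function.update y j u) with ha
  set A := gAvg d₀ n fin (j:ℕ) y with hA
  have hjd : (j:ℕ) < d₀ := j.isLt
  have hrecn : (n:ℝ) * A = ∑ u ∈ Finset.Icc (1:ℤ) n, a u := by
    have h := gAvg_rec d₀ n fin hjd hn y
    simp only [Fin.eta] at h
    rw [hA, h, mul_div_cancel₀ _ (ne_of_gt hn0)]
  have haub : ∀ u ∈ Finset.Icc (1:ℤ) (n:ℤ), -M ≤ a u ∧ a u ≤ ε := by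
    intro u hu
    exact gAvg_bounds d₀ n fin hM hε hn hrange (j := (j:ℕ)+1) (by omega)
      (update_mem_boxIdx d₀ n hy j hu)
  have hsplit : ∑ u ∈ Finset.Icc (1:ℤ) (n:ℤ), a u
      = (∑ u ∈ Finset.Icc (1:ℤ) t, a u) + ∑ u ∈ Finset.Icc (t+1) (n:ℤ), a u := by
    rw [Icc_one_eq_Ioc, Icc_one_eq_Ioc, Icc_succ_eq_Ioc,
      ← Finset.Ioc_union_Ioc_eq_Ioc (show (0:ℤ) ≤ t by omega) (show t ≤ (n:ℤ) by omega),
      Finset.sum_union (by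
        refine Finset.disjoint_left.2 fun x hx hx' => ?_
        simp only [Finset.mem_Ioc] at hx hx'
        omega)]
  have hc1 : ((Finset.Icc (1:ℤ) t).card : ℝ) = t := by
    rw [card_Icc_real (by omega)]; ring
  have hc2 : ((Finset.Icc (t+1) (n:ℤ)).card : ℝ) = (n:ℝ) - t := by
    rw [card_Icc_real (by omega)]; push_cast; ring
  rcases hcase with h0 | hclose
  · have hA0 : 0 ≤ A := by
      rw [hA, gAvg]
      exact div_nonneg h0 (by positivity)
    have hS1 : ∑ u ∈ Finset.Icc (1:ℤ) t, a u ≤ (t:ℝ) * ε := by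
      calc ∑ u ∈ Finset.Icc (1:ℤ) t, a u ≤ ∑ u ∈ Finset.Icc (1:ℤ) t, ε :=
            Finset.sum_le_sum fun u hu => (haub u (by
              simp only [Finset.mem_Icc] at hu ⊢; omega)).2
        _ = (t:ℝ) * ε := by rw [Finset.sum_const, nsmul_eq_mul, hc1]
    have hS2 : ∑ u ∈ Finset.Icc (t+1) (n:ℤ), a u ≤ ((n:ℝ) - t) * ε := by
      calc ∑ u ∈ Finset.Icc (t+1) (n:ℤ), a u ≤ ∑ u ∈ Finset.Icc (t+1) (n:ℤ), ε :=
            Finset.sum_le_sum fun u hu => (haub u (by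
              simp only [Finset.mem_Icc] at hu ⊢; omega)).2
        _ = ((n:ℝ) - t) * ε := by rw [Finset.sum_const, nsmul_eq_mul, hc2]
    rw [abs_le]
    constructor <;> nlinarith [hrecn, hsplit]
  · have hclose' : ∀ u ∈ Finset.Icc (1:ℤ) (n:ℤ), |a u - A| ≤ ε := by
      intro u hu
      have hsum : (n:ℝ) * (a u - A) = ∑ v ∈ Finset.Icc (1:ℤ) (n:ℤ), (a u - a v) := by
        rw [Finset.sum_sub_distrib, Finset.sum_const, nsmul_eq_mul, ← hrecn]
        have : ((Finset.Icc (1:ℤ) (n:ℤ)).card : ℝ) = n := by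
          rw [card_Icc_real (by omega)]; push_cast; ring
        rw [this]; ring
      have hb : |(n:ℝ) * (a u - A)| ≤ (n:ℝ) * ε := by
        rw [hsum]
        refine le_trans (Finset.abs_sum_le_sum_abs _ _) ?_
        calc ∑ v ∈ Finset.Icc (1:ℤ) (n:ℤ), |a u - a v|
            ≤ ∑ v ∈ Finset.Icc (1:ℤ) (n:ℤ), ε :=
              Finset.sum_le_sum fun v hv => gAvg_close d₀ n fin hn hy hclose hu hv
          _ = (n:ℝ) * ε := by
              rw [Finset.sum_const, nsmul_eq_mul, card_Icc_real (by omega)]; push_cast; ring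
      rw [abs_mul, abs_of_pos hn0] at hb
      nlinarith [abs_nonneg (a u - A)]
    have : |(∑ u ∈ Finset.Icc (1:ℤ) t, a u) - t * A| ≤ (t:ℝ) * ε := by
      have hrw : (∑ u ∈ Finset.Icc (1:ℤ) t, a u) - t * A
          = ∑ u ∈ Finset.Icc (1:ℤ) t, (a u - A) := by
        rw [Finset.sum_sub_distrib, Finset.sum_const, nsmul_eq_mul, hc1]
      rw [hrw]
      refine le_trans (Finset.abs_sum_le_sum_abs _ _) ?_
      calc ∑ u ∈ Finset.Icc (1:ℤ) t, |a u - A|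
          ≤ ∑ u ∈ Finset.Icc (1:ℤ) t, ε :=
            Finset.sum_le_sum fun u hu => hclose' u (by
              simp only [Finset.mem_Icc] at hu ⊢; omega)
        _ = (t:ℝ) * ε := by rw [Finset.sum_const, nsmul_eq_mul, hc1]
    calc |(∑ u ∈ Finset.Icc (1:ℤ) t, a u) - t * A| ≤ (t:ℝ) * ε := this
      _ ≤ ((n:ℝ) - 1) * ε := by nlinarith


noncomputable def csl (n : ℕ) (s : ℤ) : ℝ := (s : ℝ) / ((n:ℝ) - 1)

lemma csl_zero : csl n 0 = 0 := by simp [csl]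

lemma csl_mem {s : ℤ} (h0 : 0 ≤ s) (h1 : s ≤ (n:ℤ) - 1) : 0 ≤ csl n s ∧ csl n s ≤ 1 := by
  rcases le_or_gt (n:ℤ) 1 with h | h
  · have : s = 0 := by omega
    subst this
    simp [csl_zero]
  · have hpos : (0:ℝ) < (n:ℝ) - 1 := by
      have : (1:ℝ) < (n:ℝ) := by exact_mod_cast h
      linarith
    constructor
    · exact div_nonneg (by exact_mod_cast h0) (le_of_lt hpos)
    · rw [csl, div_le_one hpos]
      exact_mod_cast h1

lemma csl_step {s : ℤ} (hn2 : 2 ≤ n) : csl n s - csl n (s-1) = 1 / ((n:ℝ) - 1) := by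
  have hpos : (0:ℝ) < (n:ℝ) - 1 := by
    have : (2:ℝ) ≤ (n:ℝ) := by exact_mod_cast hn2
    linarith
  rw [csl, csl]
  push_cast
  field_simp
  ring

lemma c_top (hn : 1 ≤ n) {j : ℕ} (hj : j < d₀) {y : Fin d₀ → ℤ} (hy : y ∈ boxIdx d₀ n) :
    gAvg d₀ n fin (j+1) y + csl n ((n:ℤ)-1) * (gAvg d₀ n fin j y - gAvg d₀ n fin (j+1) y)
      = gAvg d₀ n fin j y := by
  rcases eq_or_lt_of_le hn with h1 | h2
  · -- n = 1
    have hn1 : n = 1 := h1.symm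
    subst hn1
    have key : gAvg d₀ 1 fin j y = gAvg d₀ 1 fin (j+1) y := by
      have hrec := gAvg_rec d₀ 1 fin hj (le_refl 1) y
      have hy1 : y ⟨j, hj⟩ = 1 := by
        rw [mem_boxIdx] at hy
        have := hy ⟨j, hj⟩
        omega
      rw [hrec]
      have hIcc : Finset.Icc (1:ℤ) ((1:ℕ):ℤ) = {1} := by norm_num
      rw [hIcc, Finset.sum_singleton, ← hy1, Function.update_eq_self]
      norm_num
    rw [key]
    ring
  · -- 2 ≤ n
    have hcs : csl n ((n:ℤ)-1) = 1 := by
      have hpos : (0:ℝ) < (n:ℝ) - 1 := by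
        have : (1:ℝ) < (n:ℝ) := by exact_mod_cast h2
        linarith
      rw [csl]
      push_cast
      field_simp
    rw [hcs]
    ring

noncomputable def Flong (z0 : ℤ) (y : Fin d₀ → ℤ) : ℝ :=
  gAvg d₀ n fin (d₀ - 1 - (z0 / (n:ℤ)).toNat + 1) y
    + csl n (z0 % n) * (gAvg d₀ n fin (d₀ - 1 - (z0 / (n:ℤ)).toNat) y
      - gAvg d₀ n fin (d₀ - 1 - (z0 / (n:ℤ)).toNat + 1) y)

noncomputable def Ftrans (z0 : ℤ) (y : Fin d₀ → ℤ) (k : Fin d₀) : ℝ :=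
  if (k : ℕ) = d₀ - 1 - (z0 / (n:ℤ)).toNat ∧ 1 ≤ z0 % n then
    ((∑ u ∈ Finset.Icc (1:ℤ) (y k), gAvg d₀ n fin ((k:ℕ)+1) (Function.update y k u))
      - (y k) * gAvg d₀ n fin (k:ℕ) y) / ((n:ℝ) - 1)
  else 0

noncomputable def Fstr : Streamm (d₀+1) := fun e =>
  if 0 ≤ e.1 0 ∧ e.1 0 < ((d₀ * n : ℕ) : ℤ) ∧ (fun k => e.1 k.succ) ∈ boxIdx d₀ n then
    if h : e.2 = 0 then Flong d₀ n fin (e.1 0) (fun k => e.1 k.succ)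
    else Ftrans d₀ n fin (e.1 0) (fun k => e.1 k.succ) (e.2.pred h)
  else 0

lemma Fstr_zero {e : Edge (d₀+1)}
    (h : ¬(0 ≤ e.1 0 ∧ e.1 0 < ((d₀ * n : ℕ) : ℤ) ∧ (fun k => e.1 k.succ) ∈ boxIdx d₀ n)) :
    Fstr d₀ n fin e = 0 := by
  rw [Fstr, if_neg h]

lemma Fstr_long {z : Fin (d₀+1) → ℤ}
    (h : 0 ≤ z 0 ∧ z 0 < ((d₀ * n : ℕ) : ℤ) ∧ (fun k => z k.succ) ∈ boxIdx d₀ n) :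
    Fstr d₀ n fin (z, 0) = Flong d₀ n fin (z 0) (fun k => z k.succ) := by
  rw [Fstr, if_pos h, dif_pos rfl]

lemma Fstr_trans {z : Fin (d₀+1) → ℤ} (k : Fin d₀)
    (h : 0 ≤ z 0 ∧ z 0 < ((d₀ * n : ℕ) : ℤ) ∧ (fun k => z k.succ) ∈ boxIdx d₀ n) :
    Fstr d₀ n fin (z, k.succ) = Ftrans d₀ n fin (z 0) (fun k => z k.succ) k := by
  rw [Fstr, if_pos h, dif_neg (Fin.succ_ne_zero k), Fin.pred_succ]

lemma ediv_emod_of (hn : 1 ≤ n) {z0 q r : ℤ} (h : z0 = r + q * n) (h0 : 0 ≤ r)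
    (h1 : r < n) : z0 / (n:ℤ) = q ∧ z0 % (n:ℤ) = r := by
  have hne : (n:ℤ) ≠ 0 := by omega
  constructor
  · rw [h, Int.add_mul_ediv_right _ _ hne, Int.ediv_eq_zero_of_lt h0 h1, zero_add]
  · rw [h, Int.add_mul_emod_self_right, Int.emod_eq_of_lt h0 h1]

lemma filter_eq_idxSet (i : Fin d₀) (y : Fin d₀ → ℤ) :
    (boxIdx d₀ n).filter (fun x => ∀ k, k < i → x k = y k) = idxSet d₀ n (i:ℕ) y := by
  unfold idxSet
  apply Finset.filter_congr
  intro x _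
  simp only [Fin.lt_def]

lemma gAvg_congr {j : ℕ} {y y' : Fin d₀ → ℤ} (h : ∀ k : Fin d₀, (k:ℕ) < j → y k = y' k) :
    gAvg d₀ n fin j y = gAvg d₀ n fin j y' := by
  unfold gAvg pSum
  have hset : idxSet d₀ n j y = idxSet d₀ n j y' := by
    unfold idxSet
    apply Finset.filter_congr
    intro x _
    constructor
    · intro hx k hk
      rw [hx k hk, h k hk]
    · intro hx k hk
      rw [hx k hk, ← h k hk]
  rw [hset]

lemma sum_Icc_one_step {t : ℤ} (h : 1 ≤ t) (f : ℤ → ℝ) :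
    ∑ u ∈ Finset.Icc (1:ℤ) t, f u = (∑ u ∈ Finset.Icc (1:ℤ) (t-1), f u) + f t := by
  have hins : Finset.Icc (1:ℤ) t = insert t (Finset.Icc 1 (t-1)) := by
    ext x
    simp only [Finset.mem_Icc, Finset.mem_insert]
    omega
  rw [hins, Finset.sum_insert (by simp only [Finset.mem_Icc]; omega)]
  ring

lemma Ftrans_top (hn : 1 ≤ n) {y : Fin d₀ → ℤ} (k : Fin d₀) (h : y k = (n:ℤ)) (z0 : ℤ) :
    Ftrans d₀ n fin z0 y k = 0 := by
  rw [Ftrans]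
  split
  · have hrec := gAvg_rec d₀ n fin k.isLt hn y
    simp only [Fin.eta] at hrec
    rw [h, hrec]
    have hn0 : ((n:ℝ)) ≠ 0 := by positivity
    field_simp
    simp
  · rfl

lemma unshift_zero_head {d : ℕ} (z : Fin (d+1) → ℤ) : (unshift z 0) 0 = z 0 - 1 := by
  simp [unshift]

lemma unshift_zero_tail {d : ℕ} (z : Fin (d+1) → ℤ) :
    (fun k : Fin d => (unshift z 0) k.succ) = (fun k => z k.succ) := by
  funext k
  simp [unshift, Fin.succ_ne_zero]

lemma unshift_succ_head {d : ℕ} (z : Fin (d+1) → ℤ) (k : Fin d) :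
    (unshift z k.succ) 0 = z 0 := by
  simp [unshift, (Fin.succ_ne_zero k).symm]

lemma unshift_succ_tail {d : ℕ} (z : Fin (d+1) → ℤ) (k : Fin d) :
    (fun k' : Fin d => (unshift z k.succ) k'.succ)
      = Function.update (fun k' => z k'.succ) k (z k.succ - 1) := by
  funext k'
  rcases eq_or_ne k' k with rfl | h
  · simp [unshift]
  · simp [unshift, Function.update_of_ne h, Fin.succ_inj.ne.2 h]

lemma Fstr_support (e : Edge (d₀+1)) (h : ¬inBoxEdge d₀ (d₀ * n) n e) :
    Fstr d₀ n fin e = 0 := by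
  apply Fstr_zero
  rintro ⟨h1, h2, h3⟩
  exact h ⟨h1, by exact_mod_cast h2, fun k => mem_boxIdx.1 h3 k⟩

lemma Fstr_bounds {M ε : ℝ} (hd : 1 ≤ d₀) (hM : 0 < M) (hε : 0 < ε) (hn : 1 ≤ n)
    (hrange : ∀ y ∈ boxIdx d₀ n, -M ≤ fin y ∧ fin y ≤ ε)
    (hcase : ∀ i : Fin d₀, ∀ y : Fin d₀ → ℤ, 0 ≤ pSum d₀ n fin (i:ℕ) y ∨
      ∀ x ∈ idxSet d₀ n (i:ℕ) y, ∀ z ∈ idxSet d₀ n (i:ℕ) y, |fin x - fin z| ≤ ε)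
    (e : Edge (d₀+1)) :
    (e.2 = 0 → -M ≤ Fstr d₀ n fin e ∧ Fstr d₀ n fin e ≤ ε)
      ∧ (e.2 ≠ 0 → |Fstr d₀ n fin e| ≤ ε) := by
  obtain ⟨z, i⟩ := e
  have hnZ : (0:ℤ) < (n:ℤ) := by exact_mod_cast hn
  constructor
  · intro he
    simp only at he
    subst he
    by_cases hc : 0 ≤ z 0 ∧ z 0 < ((d₀ * n : ℕ) : ℤ) ∧ (fun k => z k.succ) ∈ boxIdx d₀ n
    · rw [Fstr_long d₀ n fin hc, Flong]
      set j := d₀ - 1 - (z 0 / (n:ℤ)).toNat with hj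
      have hy : (fun k => z k.succ) ∈ boxIdx d₀ n := hc.2.2
      have hb1 := gAvg_bounds d₀ n fin hM hε hn hrange (j := j) (by omega) hy
      have hb2 := gAvg_bounds d₀ n fin hM hε hn hrange (j := j+1) (by omega) hy
      have hs0 : 0 ≤ z 0 % (n:ℤ) := Int.emod_nonneg _ (by omega)
      have hs1 : z 0 % (n:ℤ) ≤ (n:ℤ) - 1 := by
        have := Int.emod_lt_of_pos (z 0) hnZ
        omega
      have hcm := csl_mem n hs0 hs1
      constructor <;> nlinarith [hb1.1, hb1.2, hb2.1, hb2.2, hcm.1, hcm.2]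
    · rw [Fstr_zero d₀ n fin hc]
      constructor <;> linarith
  · intro hne
    simp only at hne
    by_cases hc : 0 ≤ z 0 ∧ z 0 < ((d₀ * n : ℕ) : ℤ) ∧ (fun k => z k.succ) ∈ boxIdx d₀ n
    · have hrepr : (z, i) = (z, (i.pred hne).succ) := by rw [Fin.succ_pred]
      rw [hrepr, Fstr_trans d₀ n fin (i.pred hne) hc]
      set k := i.pred hne with hk
      set y : Fin d₀ → ℤ := fun k => z k.succ with hydef
      have hy : y ∈ boxIdx d₀ n := hc.2.2
      have hyk := mem_boxIdx.1 hy k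
      rcases eq_or_lt_of_le hyk.2 with heq | hlt
      · rw [Ftrans_top d₀ n fin hn k heq (z 0)]
        simpa using le_of_lt hε
      · rw [Ftrans]
        split
        · rename_i hgate
          have hs : 1 ≤ z 0 % (n:ℤ) := hgate.2
          have hsn : z 0 % (n:ℤ) < (n:ℤ) := Int.emod_lt_of_pos (z 0) hnZ
          have hn2 : (2:ℤ) ≤ (n:ℤ) := by omega
          have hpos : (0:ℝ) < (n:ℝ) - 1 := by
            have : (2:ℝ) ≤ (n:ℝ) := by exact_mod_cast hn2
            linarith
          have hb := trans_bound d₀ n fin hM hε hn hrange hy (hcase k y)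
            (t := y k) hyk.1 (by omega)
          rw [abs_div, abs_of_pos hpos, div_le_iff₀ hpos]
          calc |(∑ u ∈ Finset.Icc (1:ℤ) (y k),
                gAvg d₀ n fin ((k:ℕ)+1) (Function.update y k u)) - (y k) * gAvg d₀ n fin (k:ℕ) y|
              ≤ ((n:ℝ) - 1) * ε := hb
            _ = ε * ((n:ℝ) - 1) := by ring
        · simpa using le_of_lt hε
    · rw [Fstr_zero d₀ n fin hc]
      simpa using le_of_lt hε

lemma Fstr_input (hd : 1 ≤ d₀) (hn : 1 ≤ n) {y : Fin d₀ → ℤ} (hy : y ∈ boxIdx d₀ n) :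
    Fstr d₀ n fin (Fin.cons 0 y, 0) = fin y := by
  have htail : (fun k : Fin d₀ => (Fin.cons (0:ℤ) y : Fin (d₀+1) → ℤ) k.succ) = y := by
    funext k
    simp
  have hdn : (0:ℤ) < ((d₀ * n : ℕ) : ℤ) := by
    have : 1 ≤ d₀ * n := Nat.one_le_iff_ne_zero.2 (by positivity)
    exact_mod_cast this
  have hc : 0 ≤ (Fin.cons (0:ℤ) y : Fin (d₀+1) → ℤ) 0
      ∧ (Fin.cons (0:ℤ) y : Fin (d₀+1) → ℤ) 0 < ((d₀ * n : ℕ) : ℤ)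
      ∧ (fun k : Fin d₀ => (Fin.cons (0:ℤ) y : Fin (d₀+1) → ℤ) k.succ) ∈ boxIdx d₀ n := by
    refine ⟨by simp, by simpa using hdn, by rw [htail]; exact hy⟩
  rw [Fstr_long d₀ n fin hc, htail, Flong]
  simp only [Fin.cons_zero]
  rw [Int.zero_ediv, Int.zero_emod, csl_zero, Int.toNat_zero, zero_mul, add_zero]
  have hjd : d₀ - 1 - 0 + 1 = d₀ := by omega
  rw [hjd, gAvg, pSum_top d₀ n fin hy]
  simp

lemma Fstr_output (hd : 1 ≤ d₀) (hn : 1 ≤ n) {y : Fin d₀ → ℤ} (hy : y ∈ boxIdx d₀ n) :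
    Fstr d₀ n fin (Fin.cons ((d₀ * n : ℕ) - 1 : ℤ) y, 0)
      = (1 / (n : ℝ) ^ d₀) * ∑ x ∈ boxIdx d₀ n, fin x := by
  set z0 : ℤ := ((d₀ * n : ℕ) : ℤ) - 1 with hz0
  have hdn : (1:ℤ) ≤ ((d₀ * n : ℕ) : ℤ) := by
    have : 1 ≤ d₀ * n := Nat.one_le_iff_ne_zero.2 (by positivity)
    exact_mod_cast this
  have htail : (fun k : Fin d₀ => (Fin.cons z0 y : Fin (d₀+1) → ℤ) k.succ) = y := by
    funext k
    simp
  have hc : 0 ≤ (Fin.cons z0 y : Fin (d₀+1) → ℤ) 0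
      ∧ (Fin.cons z0 y : Fin (d₀+1) → ℤ) 0 < ((d₀ * n : ℕ) : ℤ)
      ∧ (fun k : Fin d₀ => (Fin.cons z0 y : Fin (d₀+1) → ℤ) k.succ) ∈ boxIdx d₀ n := by
    refine ⟨by simp only [Fin.cons_zero]; omega, by simp only [Fin.cons_zero]; omega,
      by rw [htail]; exact hy⟩
  rw [Fstr_long d₀ n fin hc, htail, Flong]
  simp only [Fin.cons_zero]
  have hdm := ediv_emod_of n hn (z0 := z0) (q := (d₀:ℤ) - 1) (r := (n:ℤ) - 1)
    (by push_cast [hz0]; ring) (by omega) (by omega)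
  rw [hdm.1, hdm.2]
  have htn : ((d₀:ℤ) - 1).toNat = d₀ - 1 := by omega
  rw [htn]
  have hj0 : d₀ - 1 - (d₀ - 1) = 0 := by omega
  rw [hj0]
  rw [c_top d₀ n fin hn (by omega) hy]
  rw [gAvg, pSum, idxSet_zero]
  have : d₀ - 0 = d₀ := by omega
  rw [this]
  ring

lemma Fstr_nodeLaw (hd : 1 ≤ d₀) (hn : 1 ≤ n)
    (z : Fin (d₀+1) → ℤ)
    (h0 : ¬(z 0 = 0 ∧ ∀ k : Fin d₀, 1 ≤ z k.succ ∧ z k.succ ≤ (n : ℤ)))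
    (hT : ¬(z 0 = ((d₀ * n : ℕ) : ℤ) ∧ ∀ k : Fin d₀, 1 ≤ z k.succ ∧ z k.succ ≤ (n : ℤ))) :
    nodeLaw (Fstr d₀ n fin) z := by
  rw [nodeLaw, Fin.sum_univ_succ]
  have hnZ : (0:ℤ) < (n:ℤ) := by exact_mod_cast hn
  have hD : ((d₀ * n : ℕ) : ℤ) = (d₀:ℤ) * (n:ℤ) := by push_cast; ring
  by_cases hyb : (fun k : Fin d₀ => z k.succ) ∈ boxIdx d₀ n
  swap
  · -- y ∉ box : every term vanishes
    have hz1 : Fstr d₀ n fin (z, 0) = 0 := Fstr_zero d₀ n fin (by rintro ⟨-, -, h3⟩; exact hyb h3)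
    have hz2 : Fstr d₀ n fin (unshift z 0, 0) = 0 := by
      apply Fstr_zero
      rintro ⟨-, -, h3⟩
      have h3' : (fun k : Fin d₀ => (unshift z 0) k.succ) ∈ boxIdx d₀ n := h3
      rw [unshift_zero_tail] at h3'
      exact hyb h3'
    have hz3 : ∀ k : Fin d₀,
        Fstr d₀ n fin (z, k.succ) - Fstr d₀ n fin (unshift z k.succ, k.succ) = 0 := by
      intro k
      have ha : Fstr d₀ n fin (z, k.succ) = 0 :=
        Fstr_zero d₀ n fin (by rintro ⟨-, -, h3⟩; exact hyb h3)
      have hb : Fstr d₀ n fin (unshift z k.succ, k.succ) = 0 := by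
        by_cases hc : 0 ≤ (unshift z k.succ) 0 ∧ (unshift z k.succ) 0 < ((d₀ * n : ℕ) : ℤ)
            ∧ (fun k' : Fin d₀ => (unshift z k.succ) k'.succ) ∈ boxIdx d₀ n
        · rw [Fstr_trans d₀ n fin k hc]
          have h3 := hc.2.2
          have hbox := mem_boxIdx.1 h3
          have hptk : (unshift z k.succ) k.succ = z k.succ - 1 := by
            have := congrFun (unshift_succ_tail z k) k
            rwa [Function.update_self] at this
          have hyk : (unshift z k.succ) k.succ = (n:ℤ) := by
            by_contra hne
            apply hyb
            rw [mem_boxIdx]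
            intro k'
            show 1 ≤ z k'.succ ∧ z k'.succ ≤ (n:ℤ)
            have hb' : 1 ≤ (unshift z k.succ) k'.succ
                ∧ (unshift z k.succ) k'.succ ≤ (n:ℤ) := hbox k'
            rcases eq_or_ne k' k with rfl | hkk
            · rw [hptk] at hb'
              rw [hptk] at hne
              omega
            · have hpt : (unshift z k.succ) k'.succ = z k'.succ := by
                have := congrFun (unshift_succ_tail z k) k'
                rwa [Function.update_of_ne hkk] at this
              rw [hpt] at hb'
              exact hb'
          exact Ftrans_top d₀ n fin hn k hyk _
        · exact Fstr_zero d₀ n fin hc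
      rw [ha, hb]
      ring
    rw [hz1, hz2]
    rw [Finset.sum_congr rfl (fun k _ => hz3 k), Finset.sum_const]
    simp
  -- y ∈ box
  · have hybk := mem_boxIdx.1 hyb
    have h0' : z 0 ≠ 0 := fun h => h0 ⟨h, fun k => hybk k⟩
    have hT' : z 0 ≠ ((d₀ * n : ℕ) : ℤ) := fun h => hT ⟨h, fun k => hybk k⟩
    by_cases hzr : 0 ≤ z 0 ∧ z 0 < ((d₀ * n : ℕ) : ℤ)
    swap
    · -- z0 fully outside the slab range
      have hout : z 0 < 0 ∨ ((d₀ * n : ℕ) : ℤ) < z 0 := by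
        push_neg at hzr
        by_cases h : 0 ≤ z 0
        · right
          have := hzr h
          omega
        · left
          omega
      have hz1 : Fstr d₀ n fin (z, 0) = 0 := by
        apply Fstr_zero
        rintro ⟨ha, hb, -⟩
        have ha' : 0 ≤ z 0 := ha
        have hb' : z 0 < ((d₀ * n : ℕ) : ℤ) := hb
        rcases hout with h' | h' <;> omega
      have hz2 : Fstr d₀ n fin (unshift z 0, 0) = 0 := by
        apply Fstr_zero
        rintro ⟨ha, hb, -⟩
        have ha' : 0 ≤ z 0 - 1 := by rw [← unshift_zero_head z]; exact ha
        have hb' : z 0 - 1 < ((d₀ * n : ℕ) : ℤ) := by rw [← unshift_zero_head z]; exact hb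
        rcases hout with h' | h' <;> omega
      have hz3 : ∀ k : Fin d₀,
          Fstr d₀ n fin (z, k.succ) - Fstr d₀ n fin (unshift z k.succ, k.succ) = 0 := by
        intro k
        have ha : Fstr d₀ n fin (z, k.succ) = 0 := by
          apply Fstr_zero
          rintro ⟨ha, hb, -⟩
          have ha' : 0 ≤ z 0 := ha
          have hb' : z 0 < ((d₀ * n : ℕ) : ℤ) := hb
          rcases hout with h' | h' <;> omega
        have hb : Fstr d₀ n fin (unshift z k.succ, k.succ) = 0 := by
          apply Fstr_zero
          rintro ⟨ha, hb, -⟩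
          have ha' : 0 ≤ z 0 := by rw [← unshift_succ_head z k]; exact ha
          have hb' : z 0 < ((d₀ * n : ℕ) : ℤ) := by rw [← unshift_succ_head z k]; exact hb
          rcases hout with h' | h' <;> omega
        rw [ha, hb]
        ring
      rw [hz1, hz2]
      rw [Finset.sum_congr rfl (fun k _ => hz3 k), Finset.sum_const]
      simp
    · -- main case : 0 < z 0 < d₀ n
      have hz0pos : 1 ≤ z 0 := by
        rcases hzr with ⟨h1, -⟩
        omega
      set s := z 0 % (n:ℤ) with hsdef
      set mz := z 0 / (n:ℤ) with hmdef
      have hs0 : 0 ≤ s := Int.emod_nonneg _ (by omega)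
      have hsn : s < (n:ℤ) := Int.emod_lt_of_pos _ hnZ
      have heq : z 0 = mz * (n:ℤ) + s := by
        rw [mul_comm]
        exact (Int.mul_ediv_add_emod (z 0) (n:ℤ)).symm
      have hm0 : 0 ≤ mz := Int.ediv_nonneg hzr.1 (le_of_lt hnZ)
      have hmlt : mz < (d₀:ℤ) := by
        by_contra hcon
        push_neg at hcon
        have h2 := hzr.2
        rw [hD] at h2
        nlinarith
      set m := mz.toNat with hmN
      have hmz : mz = (m:ℤ) := (Int.toNat_of_nonneg hm0).symm
      have hmd : m < d₀ := by omega
      set j := d₀ - 1 - m with hjdef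
      have hjd : j < d₀ := by omega
      have hT1 : (z 0 / (n:ℤ)).toNat = m := by rw [← hmdef]
      have hcz : 0 ≤ z 0 ∧ z 0 < ((d₀ * n : ℕ) : ℤ)
          ∧ (fun k : Fin d₀ => z k.succ) ∈ boxIdx d₀ n := ⟨hzr.1, hzr.2, hyb⟩
      have hcz1 : 0 ≤ (unshift z 0) 0 ∧ (unshift z 0) 0 < ((d₀ * n : ℕ) : ℤ)
          ∧ (fun k : Fin d₀ => (unshift z 0) k.succ) ∈ boxIdx d₀ n := by
        refine ⟨?_, ?_, ?_⟩
        · rw [unshift_zero_head]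
          omega
        · rw [unshift_zero_head]
          omega
        · rw [unshift_zero_tail]
          exact hyb
      by_cases hs1 : 1 ≤ s
      · -- interior layer of a slab
        have hn2 : (2:ℤ) ≤ (n:ℤ) := by omega
        have hn2' : 2 ≤ n := by exact_mod_cast hn2
        have hne1 : ((n:ℝ)) - 1 ≠ 0 := by
          have : (2:ℝ) ≤ (n:ℝ) := by exact_mod_cast hn2
          linarith
        have hdm1 := ediv_emod_of n hn (z0 := z 0 - 1) (q := mz) (r := s - 1)
          (by linear_combination heq) (by omega) (by omega)
        have hT2 : ((z 0 - 1) / (n:ℤ)).toNat = m := by rw [hdm1.1]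
        -- the transverse sum
        have hksum : (∑ k : Fin d₀, (Fstr d₀ n fin (z, k.succ)
              - Fstr d₀ n fin (unshift z k.succ, k.succ)))
            = (gAvg d₀ n fin (j+1) (fun k : Fin d₀ => z k.succ)
                - gAvg d₀ n fin j (fun k : Fin d₀ => z k.succ)) / ((n:ℝ) - 1) := by
          rw [Finset.sum_eq_single_of_mem (⟨j, hjd⟩ : Fin d₀) (Finset.mem_univ _) ?side]
          case side =>
            intro k _ hk
            have hkj : (k:ℕ) ≠ j := fun h => hk (Fin.ext h)
            have hgate : ¬((k:ℕ) = d₀ - 1 - m ∧ 1 ≤ z 0 % (n:ℤ)) := by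
              rintro ⟨hcon, -⟩
              exact hkj (by rw [hjdef]; exact hcon)
            have h1 : Fstr d₀ n fin (z, k.succ) = 0 := by
              rw [Fstr_trans d₀ n fin k hcz, Ftrans, hT1, if_neg hgate]
            have h2 : Fstr d₀ n fin (unshift z k.succ, k.succ) = 0 := by
              by_cases hc' : 0 ≤ (unshift z k.succ) 0
                  ∧ (unshift z k.succ) 0 < ((d₀ * n : ℕ) : ℤ)
                  ∧ (fun k' : Fin d₀ => (unshift z k.succ) k'.succ) ∈ boxIdx d₀ n
              · rw [Fstr_trans d₀ n fin k hc', Ftrans, unshift_succ_head z k, hT1,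
                  if_neg hgate]
              · exact Fstr_zero d₀ n fin hc'
            rw [h1, h2]
            ring
          -- the active direction
          set k₀ : Fin d₀ := ⟨j, hjd⟩ with hk₀
          have hk₀v : (k₀:ℕ) = j := rfl
          have hgate : ((k₀:ℕ) = d₀ - 1 - m ∧ 1 ≤ z 0 % (n:ℤ)) := by
            constructor
            · rw [hk₀v, hjdef]
            · rw [← hsdef]
              exact hs1
          have htk : 1 ≤ z k₀.succ ∧ z k₀.succ ≤ (n:ℤ) := hybk k₀
          have hV1 : Fstr d₀ n fin (z, k₀.succ)
              = ((∑ u ∈ Finset.Icc (1:ℤ) (z k₀.succ),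
                  gAvg d₀ n fin (j+1) (Function.update (fun k : Fin d₀ => z k.succ) k₀ u))
                - (z k₀.succ) * gAvg d₀ n fin j (fun k : Fin d₀ => z k.succ)) / ((n:ℝ) - 1) := by
            rw [Fstr_trans d₀ n fin k₀ hcz, Ftrans, hT1, if_pos hgate]
          by_cases ht1 : z k₀.succ = 1
          · -- transverse edge below leaves the box
            have h2 : Fstr d₀ n fin (unshift z k₀.succ, k₀.succ) = 0 := by
              apply Fstr_zero
              rintro ⟨-, -, h3⟩
              have hb' : 1 ≤ (unshift z k₀.succ) k₀.succ
                  ∧ (unshift z k₀.succ) k₀.succ ≤ (n:ℤ) := mem_boxIdx.1 h3 k₀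
              have hptk : (unshift z k₀.succ) k₀.succ = z k₀.succ - 1 := by
                have := congrFun (unshift_succ_tail z k₀) k₀
                rwa [Function.update_self] at this
              rw [hptk] at hb'
              omega
            rw [hV1, h2, ht1]
            have hIcc : Finset.Icc (1:ℤ) 1 = {1} := Finset.Icc_self 1
            rw [hIcc, Finset.sum_singleton]
            have hupd : Function.update (fun k : Fin d₀ => z k.succ) k₀ 1
                = (fun k : Fin d₀ => z k.succ) := by
              have h' : Function.update (fun k : Fin d₀ => z k.succ) k₀ (z k₀.succ)
                  = (fun k : Fin d₀ => z k.succ) := Function.update_eq_self k₀ _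
              rw [← ht1]
              exact h'
            rw [hupd]
            ring
          · -- interior transverse edge
            have ht2 : 2 ≤ z k₀.succ := by omega
            have hc' : 0 ≤ (unshift z k₀.succ) 0
                ∧ (unshift z k₀.succ) 0 < ((d₀ * n : ℕ) : ℤ)
                ∧ (fun k' : Fin d₀ => (unshift z k₀.succ) k'.succ) ∈ boxIdx d₀ n := by
              refine ⟨by rw [unshift_succ_head]; omega, by rw [unshift_succ_head]; omega, ?_⟩
              rw [unshift_succ_tail]
              rw [mem_boxIdx]
              intro k'
              rcases eq_or_ne k' k₀ with rfl | hkk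
              · rw [Function.update_self]
                omega
              · rw [Function.update_of_ne hkk]
                exact hybk k'
            have hV2 : Fstr d₀ n fin (unshift z k₀.succ, k₀.succ)
                = ((∑ u ∈ Finset.Icc (1:ℤ) (z k₀.succ - 1),
                    gAvg d₀ n fin (j+1) (Function.update (fun k : Fin d₀ => z k.succ) k₀ u))
                  - (z k₀.succ - 1) * gAvg d₀ n fin j (fun k : Fin d₀ => z k.succ))
                    / ((n:ℝ) - 1) := by
              rw [Fstr_trans d₀ n fin k₀ hc', Ftrans, unshift_succ_head z k₀, hT1,
                if_pos hgate]
              have hptk : (unshift z k₀.succ) k₀.succ = z k₀.succ - 1 := by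
                have := congrFun (unshift_succ_tail z k₀) k₀
                rwa [Function.update_self] at this
              rw [unshift_succ_tail z k₀, hptk]
              have hupd2 : ∀ u : ℤ, Function.update
                    (Function.update (fun k : Fin d₀ => z k.succ) k₀ (z k₀.succ - 1)) k₀ u
                  = Function.update (fun k : Fin d₀ => z k.succ) k₀ u := by
                intro u
                rw [Function.update_idem]
              have hgc : gAvg d₀ n fin j
                    (Function.update (fun k : Fin d₀ => z k.succ) k₀ (z k₀.succ - 1))
                  = gAvg d₀ n fin j (fun k : Fin d₀ => z k.succ) := by
                apply gAvg_congr
                intro k' hk'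
                have hkk : k' ≠ k₀ := by
                  intro h
                  rw [h, hk₀v] at hk'
                  omega
                rw [Function.update_of_ne hkk]
              rw [hgc]
              rw [Finset.sum_congr rfl (fun u _ => by rw [hupd2 u])]
              push_cast
              ring
            rw [hV1, hV2]
            rw [sum_Icc_one_step htk.1]
            have hupd3 : Function.update (fun k : Fin d₀ => z k.succ) k₀ (z k₀.succ)
                = (fun k : Fin d₀ => z k.succ) := Function.update_eq_self k₀ _
            rw [hupd3]
            ring
        -- assemble
        rw [Fstr_long d₀ n fin hcz, Fstr_long d₀ n fin hcz1, unshift_zero_tail,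
          unshift_zero_head, hksum, Flong, Flong, hT1, hT2, hdm1.2, ← hsdef, ← hjdef]
        have hcsl := csl_step n (s := s) hn2'
        linear_combination (gAvg d₀ n fin j (fun k : Fin d₀ => z k.succ)
          - gAvg d₀ n fin (j+1) (fun k : Fin d₀ => z k.succ)) * hcsl
      · -- slab boundary layer (s = 0)
        have hseq : s = 0 := by omega
        have hm1 : 1 ≤ mz := by
          by_contra hcon
          push_neg at hcon
          have hmz0 : mz = 0 := by omega
          rw [hmz0, zero_mul] at heq
          omega
        have hm1' : 1 ≤ m := by omega
        rw [hseq] at heq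
        have hdm1 := ediv_emod_of n hn (z0 := z 0 - 1) (q := mz - 1) (r := (n:ℤ) - 1)
          (by linear_combination heq) (by omega) (by omega)
        have hT2 : ((z 0 - 1) / (n:ℤ)).toNat = m - 1 := by
          rw [hdm1.1]
          omega
        have hzk : ∀ k : Fin d₀,
            Fstr d₀ n fin (z, k.succ) - Fstr d₀ n fin (unshift z k.succ, k.succ) = 0 := by
          intro k
          have hgate : ¬((k:ℕ) = d₀ - 1 - m ∧ 1 ≤ z 0 % (n:ℤ)) := by
            rintro ⟨-, hcon⟩
            omega
          have h1 : Fstr d₀ n fin (z, k.succ) = 0 := by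
            rw [Fstr_trans d₀ n fin k hcz, Ftrans, hT1, if_neg hgate]
          have h2 : Fstr d₀ n fin (unshift z k.succ, k.succ) = 0 := by
            by_cases hc' : 0 ≤ (unshift z k.succ) 0
                ∧ (unshift z k.succ) 0 < ((d₀ * n : ℕ) : ℤ)
                ∧ (fun k' : Fin d₀ => (unshift z k.succ) k'.succ) ∈ boxIdx d₀ n
            · rw [Fstr_trans d₀ n fin k hc', Ftrans, unshift_succ_head z k, hT1,
                if_neg hgate]
            · exact Fstr_zero d₀ n fin hc'
          rw [h1, h2]
          ring
        rw [Fstr_long d₀ n fin hcz, Fstr_long d₀ n fin hcz1, unshift_zero_tail,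
          unshift_zero_head, Flong, Flong, hT1, hT2, hdm1.2, ← hsdef, hseq, csl_zero]
        have hjj : d₀ - 1 - (m-1) = d₀ - 1 - m + 1 := by omega
        rw [hjj, c_top d₀ n fin hn (show d₀ - 1 - m + 1 < d₀ by omega) hyb]
        rw [Finset.sum_congr rfl (fun k _ => hzk k), Finset.sum_const]
        simp

end Aux

/-- Lemma 4.4, precise mixing.  `d = d₀ + 1 ≥ 2`.  Let `-M ≤ f_in ≤ ε`
on `{1,…,n}^{d-1}`, and assume that for every `i ∈ {0,…,d-2}` and every fixing `y` of the
first `i` coordinates, either the partial sum of `f_in` over the remaining coordinates is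
nonnegative, or all the corresponding values of `f_in` are within `ε` of each other.  Then
there is a stream `f` supported in `[0,(d-1)n) × [1,n]^{d-1}`, with `-M ≤ f(e)·e₁ ≤ ε` on
edges parallel to `e₁` and `‖f(e)‖₂ ≤ ε` on the other edges, with inputs `f_in` and uniform
outputs `n^{-(d-1)} ∑ f_in`, satisfying the node law at every vertex outside
`({0} ∪ {(d-1)n}) × {1,…,n}^{d-1}`. -/
theorem statement18 (d₀ : ℕ) (hd : 1 ≤ d₀) (M ε : ℝ) (hM : 0 < M) (hε : 0 < ε)
    (n : ℕ) (hn : 1 ≤ n) (fin : (Fin d₀ → ℤ) → ℝ)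
    (hrange : ∀ y ∈ boxIdx d₀ n, -M ≤ fin y ∧ fin y ≤ ε)
    (hcond : ∀ i : Fin d₀, ∀ y : Fin d₀ → ℤ,
      (0 ≤ ∑ x ∈ (boxIdx d₀ n).filter (fun x => ∀ k, k < i → x k = y k), fin x) ∨
      (∀ x ∈ (boxIdx d₀ n).filter (fun x => ∀ k, k < i → x k = y k),
       ∀ z ∈ (boxIdx d₀ n).filter (fun x => ∀ k, k < i → x k = y k),
        |fin x - fin z| ≤ ε)) :
    ∃ F : Streamm (d₀ + 1),
      (∀ e : Edge (d₀ + 1), ¬inBoxEdge d₀ (d₀ * n) n e → F e = 0) ∧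
      (∀ e : Edge (d₀ + 1),
        (e.2 = 0 → -M ≤ F e ∧ F e ≤ ε) ∧ (e.2 ≠ 0 → |F e| ≤ ε)) ∧
      (∀ y ∈ boxIdx d₀ n,
        F (Fin.cons 0 y, 0) = fin y ∧
        F (Fin.cons ((d₀ * n : ℕ) - 1 : ℤ) y, 0)
          = (1 / (n : ℝ) ^ d₀) * ∑ z ∈ boxIdx d₀ n, fin z) ∧
      (∀ z : Fin (d₀ + 1) → ℤ,
        ¬(z 0 = 0 ∧ ∀ k : Fin d₀, 1 ≤ z k.succ ∧ z k.succ ≤ (n : ℤ)) →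
        ¬(z 0 = (d₀ * n : ℕ) ∧ ∀ k : Fin d₀, 1 ≤ z k.succ ∧ z k.succ ≤ (n : ℤ)) →
        nodeLaw F z) := by
  refine ⟨Fstr d₀ n fin, Fstr_support d₀ n fin, ?_, ?_, ?_⟩
  · intro e
    apply Fstr_bounds d₀ n fin hd hM hε hn hrange
    intro i y
    rcases hcond i y with h | h
    · left
      rw [pSum, ← filter_eq_idxSet]
      exact h
    · right
      rw [← filter_eq_idxSet]
      exact h
  · intro y hy
    exact ⟨Fstr_input d₀ n fin hd hn hy, Fstr_output d₀ n fin hd hn hy⟩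
  · intro z hz0 hzT
    exact Fstr_nodeLaw d₀ n fin hd hn z hz0 hzT

end FPP
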